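/- Let φ_1, …, φ_n : ℝⁿ → ℝ and r_1, …, r_n : ℝ² → ℝ be smooth, set Φ_j(x,y) = φ_j(r_1(x,y), …, r_n(x,y)), and suppose for each i that cos Φ_i · ∂_x r_i + sin Φ_i · ∂_y r_i = 0, that sin(Φ_i − Φ_j) ≠ 0 and cos(Φ_i − Φ_j) ≠ 0 for i ≠ j, and that there exist smooth G_j : ℝⁿ → ℝ with ∂_{r_i} G_j = (∂_{r_i} φ_j)/tan(φ_i − φ_j) for i ≠ j. Define w_j = −sin Φ_j · ∂_x r_j + cos Φ_j · ∂_y r_j and L_{v_j} f = cos Φ_j · ∂_x f + sin Φ_j · ∂_y f. Then L_{v_j} w_j + (∂_{r_j} φ_j ∘ r) · w_j² − w_j · L_{v_j}(G_j ∘ r) = 0. -/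

import Mathlib

/-- Partial derivatives on `ℝ × ℝ`. -/
noncomputable def px (f : ℝ × ℝ → ℝ) (p : ℝ × ℝ) : ℝ := fderiv ℝ f p (1, 0)
noncomputable def py (f : ℝ × ℝ → ℝ) (p : ℝ × ℝ) : ℝ := fderiv ℝ f p (0, 1)

/-- Partial derivative in the `i`-th coordinate direction of `ℝⁿ = Fin n → ℝ`. -/
noncomputable def pder {n : ℕ} (i : Fin n) (f : (Fin n → ℝ) → ℝ) (x : Fin n → ℝ) : ℝ :=
  fderiv ℝ f x (Pi.single i 1)

noncomputable def pd (v : ℝ × ℝ) (f : ℝ × ℝ → ℝ) (p : ℝ × ℝ) : ℝ := fderiv ℝ f p v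

section toolkit

variable {f g : ℝ × ℝ → ℝ} {p : ℝ × ℝ} {v : ℝ × ℝ}

lemma pd_hasFDerivAt {L : ℝ × ℝ →L[ℝ] ℝ} (h : HasFDerivAt f L p) : pd v f p = L v := by
  rw [pd, h.fderiv]

lemma pd_add (hf : DifferentiableAt ℝ f p) (hg : DifferentiableAt ℝ g p) :
    pd v (fun q => f q + g q) p = pd v f p + pd v g p := by
  rw [show pd v (fun q => f q + g q) p = pd v (f + g) p from rfl,
    pd_hasFDerivAt (hf.hasFDerivAt.add hg.hasFDerivAt)]; rfl

lemma pd_mul (hf : DifferentiableAt ℝ f p) (hg : DifferentiableAt ℝ g p) :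
    pd v (fun q => f q * g q) p = pd v f p * g p + f p * pd v g p := by
  rw [show pd v (fun q => f q * g q) p = pd v (f * g) p from rfl,
    pd_hasFDerivAt (hf.hasFDerivAt.mul hg.hasFDerivAt)]
  simp [ContinuousLinearMap.add_apply, ContinuousLinearMap.smul_apply, pd]
  ring

lemma pd_sin (hf : DifferentiableAt ℝ f p) :
    pd v (fun q => Real.sin (f q)) p = Real.cos (f p) * pd v f p := by
  rw [show pd v (fun q => Real.sin (f q)) p = pd v (Real.sin ∘ f) p from rfl,
    pd_hasFDerivAt ((Real.hasDerivAt_sin (f p)).comp_hasFDerivAt p hf.hasFDerivAt)]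
  simp [pd]

lemma pd_cos (hf : DifferentiableAt ℝ f p) :
    pd v (fun q => Real.cos (f q)) p = -Real.sin (f p) * pd v f p := by
  rw [show pd v (fun q => Real.cos (f q)) p = pd v (Real.cos ∘ f) p from rfl,
    pd_hasFDerivAt ((Real.hasDerivAt_cos (f p)).comp_hasFDerivAt p hf.hasFDerivAt)]
  simp [pd]

lemma pd_neg_mul (hf : DifferentiableAt ℝ f p) (hg : DifferentiableAt ℝ g p) :
    pd v (fun q => -f q * g q) p = -pd v f p * g p + -f p * pd v g p := by
  rw [show (fun q => -f q * g q) = fun q => -(f q * g q) by funext q; ring]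
  rw [show pd v (fun q => -(f q * g q)) p = pd v (-(f * g)) p from rfl,
    pd_hasFDerivAt (hf.hasFDerivAt.mul hg.hasFDerivAt).neg]
  simp [ContinuousLinearMap.add_apply, ContinuousLinearMap.smul_apply, pd]
  ring

lemma clm_pi_apply {n : ℕ} (L : (Fin n → ℝ) →L[ℝ] ℝ) (m : Fin n → ℝ) :
    L m = ∑ i, m i * L (Pi.single i 1) := by
  conv_lhs => rw [pi_eq_sum_univ m, map_sum]
  refine Finset.sum_congr rfl fun i _ => ?_
  rw [map_smul, smul_eq_mul]
  congr 1
  congr 1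
  funext j
  simp [Pi.single_apply, eq_comm]

lemma pd_symm (hf : ContDiff ℝ 2 f) (u v : ℝ × ℝ) (p : ℝ × ℝ) :
    pd u (pd v f) p = pd v (pd u f) p := by
  have hsym : IsSymmSndFDerivAt ℝ f p := hf.contDiffAt.isSymmSndFDerivAt (by norm_num)
  have hd : DifferentiableAt ℝ (fderiv ℝ f) p :=
    ((hf.fderiv_right (m := 1) (by norm_num)).differentiable (by norm_num)).differentiableAt
  have h2 : ∀ a b : ℝ × ℝ, pd b (pd a f) p = fderiv ℝ (fderiv ℝ f) p b a := by
    intro a b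
    rw [pd, show pd a f = fun q => (fderiv ℝ f q) ((fun _ => a) q) from rfl]
    rw [fderiv_clm_apply hd (differentiableAt_const a)]
    simp
  rw [h2, h2, hsym]

lemma contDiff_pd (hf : ContDiff ℝ 2 f) (v : ℝ × ℝ) : ContDiff ℝ 1 (pd v f) := by
  have : pd v f = fun p => (fderiv ℝ f p) ((fun _ => v) p) := rfl
  rw [this]
  exact (hf.fderiv_right (m := 1) (by norm_num)).clm_apply contDiff_const

lemma pd_comp_pi {n : ℕ} {r : Fin n → ℝ × ℝ → ℝ} {p : ℝ × ℝ}
    (hr : ∀ i, DifferentiableAt ℝ (r i) p)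
    {g : (Fin n → ℝ) → ℝ} (hg : DifferentiableAt ℝ g (fun i => r i p)) (v : ℝ × ℝ) :
    pd v (fun q => g (fun i => r i q)) p
      = ∑ i, pder i g (fun i => r i p) * pd v (r i) p := by
  have hRd : HasFDerivAt (fun (x : ℝ × ℝ) (i : Fin n) => r i x)
      (ContinuousLinearMap.pi fun i => fderiv ℝ (r i) p) p :=
    hasFDerivAt_pi.2 fun i => (hr i).hasFDerivAt
  have hc := hg.hasFDerivAt.comp p hRd
  rw [show pd v (fun q => g fun i => r i q) p = pd v (g ∘ fun x i => r i x) p from rfl,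
    pd_hasFDerivAt hc, ContinuousLinearMap.coe_comp', Function.comp_apply, clm_pi_apply]
  exact Finset.sum_congr rfl fun i _ => by simp [pder, pd, mul_comm]

end toolkit

theorem equation_14_riccati
    {n : ℕ}
    (phi G : Fin n → (Fin n → ℝ) → ℝ)
    (r : Fin n → ℝ × ℝ → ℝ)
    (hphi : ∀ i, ContDiff ℝ 2 (phi i)) (hG : ∀ i, ContDiff ℝ 2 (G i))
    (hr : ∀ i, ContDiff ℝ 2 (r i))
    -- the Riemann invariants as a vector-valued map
    (R : ℝ × ℝ → Fin n → ℝ) (hR : ∀ p i, R p i = r i p)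
    -- the characteristic angles as functions on the plane
    (Phi : Fin n → ℝ × ℝ → ℝ) (hPhi : ∀ j p, Phi j p = phi j (R p))
    -- diagonal system: L_{v_i} r_i = 0
    (hchar : ∀ i p, Real.cos (Phi i p) * px (r i) p + Real.sin (Phi i p) * py (r i) p = 0)
    -- strict hyperbolicity and transversality
    (hsin : ∀ i j, i ≠ j → ∀ p, Real.sin (Phi i p - Phi j p) ≠ 0)
    (hcos : ∀ i j, i ≠ j → ∀ p, Real.cos (Phi i p - Phi j p) ≠ 0)
    -- richness: existence of the potentials G_j, condition (Φ)
    (hGpot : ∀ i j, i ≠ j → ∀ x,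
      pder i (G j) x = pder i (phi j) x / Real.tan (phi i x - phi j x))
    -- the transverse derivatives w_j
    (w : Fin n → ℝ × ℝ → ℝ)
    (hw : ∀ j p, w j p = -Real.sin (Phi j p) * px (r j) p + Real.cos (Phi j p) * py (r j) p) :
    ∀ j p,
      (Real.cos (Phi j p) * px (w j) p + Real.sin (Phi j p) * py (w j) p)
        + pder j (phi j) (R p) * (w j p) ^ 2
        - w j p * (Real.cos (Phi j p) * px (fun q => G j (R q)) p
            + Real.sin (Phi j p) * py (fun q => G j (R q)) p) = 0 := by
  intro j p
  -- basic rewriting facts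
  have hRe : R = fun q i => r i q := funext fun q => funext (hR q)
  have hRp : (fun i => r i p) = R p := funext fun i => (hR p i).symm
  have hPhie : ∀ i, Phi i = fun q => phi i (fun k => r k q) := by
    intro i; funext q; rw [hPhi, hRe]
  -- differentiability facts
  have dr : ∀ i (q : ℝ × ℝ), DifferentiableAt ℝ (r i) q :=
    fun i q => ((hr i).differentiable (by norm_num)).differentiableAt
  have dphiAt : ∀ i (x : Fin n → ℝ), DifferentiableAt ℝ (phi i) x :=
    fun i x => ((hphi i).differentiable (by norm_num)).differentiableAt
  have dGAt : ∀ i (x : Fin n → ℝ), DifferentiableAt ℝ (G i) x :=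
    fun i x => ((hG i).differentiable (by norm_num)).differentiableAt
  have hRcd : ContDiff ℝ 2 R := by
    rw [hRe]; exact contDiff_pi.2 hr
  have hPhicd : ∀ i, ContDiff ℝ 2 (Phi i) := by
    intro i
    have : Phi i = fun q => phi i (R q) := funext (hPhi i)
    rw [this]; exact (hphi i).comp hRcd
  have dPhi : ∀ i (q : ℝ × ℝ), DifferentiableAt ℝ (Phi i) q :=
    fun i q => ((hPhicd i).differentiable (by norm_num)).differentiableAt
  have dpdr : ∀ i (v : ℝ × ℝ) (q : ℝ × ℝ), DifferentiableAt ℝ (pd v (r i)) q :=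
    fun i v q => ((contDiff_pd (hr i) v).differentiable (by norm_num)).differentiableAt
  have dpxr : ∀ i (q : ℝ × ℝ), DifferentiableAt ℝ (px (r i)) q := fun i q => dpdr i (1,0) q
  have dpyr : ∀ i (q : ℝ × ℝ), DifferentiableAt ℝ (py (r i)) q := fun i q => dpdr i (0,1) q
  have dsinPhi : ∀ (q : ℝ × ℝ), DifferentiableAt ℝ (fun q => Real.sin (Phi j q)) q :=
    fun q => (dPhi j q).sin
  have dcosPhi : ∀ (q : ℝ × ℝ), DifferentiableAt ℝ (fun q => Real.cos (Phi j q)) q :=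
    fun q => (dPhi j q).cos
  have pyth : Real.sin (Phi j p) ^ 2 + Real.cos (Phi j p) ^ 2 = 1 :=
    Real.sin_sq_add_cos_sq (Phi j p)
  -- the w-decomposition of the gradients of the r_i
  have hu : ∀ i, px (r i) p = -Real.sin (Phi i p) * w i p := by
    intro i
    have pyth' := Real.sin_sq_add_cos_sq (Phi i p)
    linear_combination Real.sin (Phi i p) * (hw i p) + Real.cos (Phi i p) * (hchar i p)
      - px (r i) p * pyth'
  have hv : ∀ i, py (r i) p = Real.cos (Phi i p) * w i p := by
    intro i
    have pyth' := Real.sin_sq_add_cos_sq (Phi i p)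
    linear_combination (-Real.cos (Phi i p)) * (hw i p) + Real.sin (Phi i p) * (hchar i p)
      - py (r i) p * pyth'
  -- chain rule for Phi j and G j ∘ R
  have hPexp : ∀ v : ℝ × ℝ, pd v (Phi j) p = ∑ i, pder i (phi j) (R p) * pd v (r i) p := by
    intro v
    rw [hPhie j, pd_comp_pi (fun i => dr i p) (dphiAt j _) v, hRp]
  have hGexp : ∀ v : ℝ × ℝ, pd v (fun q => G j (R q)) p
      = ∑ i, pder i (G j) (R p) * pd v (r i) p := by
    intro v
    have : (fun q => G j (R q)) = fun q => G j (fun k => r k q) := by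
      funext q; rw [hRe]
    rw [this, pd_comp_pi (fun i => dr i p) (dGAt j _) v, hRp]
  set P := pd (1,0) (Phi j) p with hPdef
  set Q := pd (0,1) (Phi j) p with hQdef
  -- second derivatives of r j
  set A := pd (1,0) (px (r j)) p with hA
  set B₁ := pd (1,0) (py (r j)) p with hB1
  set B₂ := pd (0,1) (px (r j)) p with hB2
  set C := pd (0,1) (py (r j)) p with hC
  have Bsym : B₁ = B₂ := by
    rw [hB1, hB2]
    exact pd_symm (hr j) (1,0) (0,1) p
  -- derivatives of w j
  have hwf : w j = fun q => -Real.sin (Phi j q) * px (r j) q + Real.cos (Phi j q) * py (r j) q :=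
    funext (hw j)
  have hpdw : ∀ v : ℝ × ℝ, pd v (w j) p
      = (-(Real.cos (Phi j p) * pd v (Phi j) p) * px (r j) p
          + -Real.sin (Phi j p) * pd v (px (r j)) p)
        + ((-Real.sin (Phi j p) * pd v (Phi j) p) * py (r j) p
          + Real.cos (Phi j p) * pd v (py (r j)) p) := by
    intro v
    rw [hwf, pd_add (f := fun q => -Real.sin (Phi j q) * px (r j) q)
        (g := fun q => Real.cos (Phi j q) * py (r j) q) ((dsinPhi p).neg.mul (dpxr j p)) ((dcosPhi p).mul (dpyr j p)),
      pd_neg_mul (dsinPhi p) (dpxr j p), pd_mul (dcosPhi p) (dpyr j p),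
      pd_sin (dPhi j p), pd_cos (dPhi j p)]
  -- derivatives of the characteristic identity
  have hFder : ∀ v : ℝ × ℝ,
      (-Real.sin (Phi j p) * pd v (Phi j) p) * px (r j) p
        + Real.cos (Phi j p) * pd v (px (r j)) p
        + ((Real.cos (Phi j p) * pd v (Phi j) p) * py (r j) p
          + Real.sin (Phi j p) * pd v (py (r j)) p) = 0 := by
    intro v
    have hF : (fun q => Real.cos (Phi j q) * px (r j) q + Real.sin (Phi j q) * py (r j) q)
        = fun _ => (0:ℝ) := funext (hchar j)
    have h0 : pd v (fun q => Real.cos (Phi j q) * px (r j) q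
        + Real.sin (Phi j q) * py (r j) q) p = 0 := by
      rw [hF]; simp [pd]
    rw [pd_add (f := fun q => Real.cos (Phi j q) * px (r j) q)
        (g := fun q => Real.sin (Phi j q) * py (r j) q) ((dcosPhi p).mul (dpxr j p)) ((dsinPhi p).mul (dpyr j p)),
      pd_mul (dcosPhi p) (dpxr j p), pd_mul (dsinPhi p) (dpyr j p),
      pd_sin (dPhi j p), pd_cos (dPhi j p)] at h0
    linear_combination h0
  have hpxwv := hpdw (1,0)
  have hpywv := hpdw (0,1)
  have Ex := hFder (1,0)
  have Ey := hFder (0,1)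
  rw [← hPdef, ← hA, ← hB1] at hpxwv Ex
  rw [← hQdef, ← hB2, ← hC] at hpywv Ey
  -- the main transport computation:  L_j w_j = -(P u_j + Q v_j)
  have hLw : Real.cos (Phi j p) * px (w j) p + Real.sin (Phi j p) * py (w j) p
      = -(P * px (r j) p + Q * py (r j) p) := by
    have h1 : px (w j) p = pd (1,0) (w j) p := rfl
    have h2 : py (w j) p = pd (0,1) (w j) p := rfl
    rw [h1, h2, hpxwv, hpywv]
    linear_combination (-Real.sin (Phi j p)) * Ex + Real.cos (Phi j p) * Ey
      + (-(P * px (r j) p + Q * py (r j) p) + B₁ - B₂) * pyth + Bsym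
  -- expansions of P, Q and of the derivatives of G j ∘ R
  have hPx : P = ∑ i, pder i (phi j) (R p) * px (r i) p := hPexp (1,0)
  have hQy : Q = ∑ i, pder i (phi j) (R p) * py (r i) p := hPexp (0,1)
  have hGx : px (fun q => G j (R q)) p = ∑ i, pder i (G j) (R p) * px (r i) p := hGexp (1,0)
  have hGy : py (fun q => G j (R q)) p = ∑ i, pder i (G j) (R p) * py (r i) p := hGexp (0,1)
  -- the summand identity
  have hsum : ∑ i, (pder i (phi j) (R p) * (px (r i) p * px (r j) p + py (r i) p * py (r j) p)
        + w j p * (pder i (G j) (R p)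
          * (Real.cos (Phi j p) * px (r i) p + Real.sin (Phi j p) * py (r i) p)))
      = pder j (phi j) (R p) * (w j p) ^ 2 := by
    rw [Finset.sum_eq_single_of_mem j (Finset.mem_univ j)]
    · -- the diagonal term
      rw [hu j, hv j]
      linear_combination (pder j (phi j) (R p) * (w j p) ^ 2) * pyth
    · -- off-diagonal terms vanish by the potential condition
      intro i _ hij
      have hgφ : pder i (G j) (R p) * Real.sin (Phi i p - Phi j p)
          = pder i (phi j) (R p) * Real.cos (Phi i p - Phi j p) := by
        have h1 := hGpot i j hij (R p)
        rw [← hPhi i p, ← hPhi j p, Real.tan_eq_sin_div_cos] at h1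
        have hs' := hsin i j hij p
        have hc' := hcos i j hij p
        rw [h1]
        field_simp
      rw [Real.sin_sub, Real.cos_sub] at hgφ
      rw [hu i, hv i, hu j, hv j]
      linear_combination (-(w i p * w j p)) * hgφ
  -- combine the sums
  have hsplit : (∑ i, pder i (phi j) (R p) * px (r i) p) * px (r j) p
      + (∑ i, pder i (phi j) (R p) * py (r i) p) * py (r j) p
      + (w j p * Real.cos (Phi j p)) * (∑ i, pder i (G j) (R p) * px (r i) p)
      + (w j p * Real.sin (Phi j p)) * (∑ i, pder i (G j) (R p) * py (r i) p)
      = ∑ i, (pder i (phi j) (R p) * (px (r i) p * px (r j) p + py (r i) p * py (r j) p)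
        + w j p * (pder i (G j) (R p)
          * (Real.cos (Phi j p) * px (r i) p + Real.sin (Phi j p) * py (r i) p))) := by
    rw [Finset.sum_mul, Finset.sum_mul, Finset.mul_sum, Finset.mul_sum,
      ← Finset.sum_add_distrib, ← Finset.sum_add_distrib, ← Finset.sum_add_distrib]
    exact Finset.sum_congr rfl fun i _ => by ring
  linear_combination hLw - px (r j) p * hPx - py (r j) p * hQy
    - (w j p * Real.cos (Phi j p)) * hGx - (w j p * Real.sin (Phi j p)) * hGy
    - hsplit - hsum
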